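/- For every real u > 2/5 there exists a constant s > 0 such that for all integers D ≥ 0 and 0 ≤ k ≤ D: (10u)^k · (4D+1−2k)!!/(D−k)! ≤ s · (100u²/(5u−1))^D · D!. -/

import Mathlib

open Real Filter Topology

set_option maxHeartbeats 1000000

namespace Stmt13

/-- `centralBinom n ^ 2 * (3n+1) ≤ 16^n`. -/
lemma centralBinom_sq_le (n : ℕ) :
    ((Nat.centralBinom n : ℝ)) ^ 2 * (3 * n + 1) ≤ 16 ^ n := by
  induction n with
  | zero => simp [Nat.centralBinom]
  | succ n ih =>
    have hrec : ((n : ℝ) + 1) * (Nat.centralBinom (n + 1) : ℝ)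
        = 2 * (2 * n + 1) * (Nat.centralBinom n : ℝ) := by
      exact_mod_cast congrArg (fun m : ℕ => (m : ℝ)) (Nat.succ_mul_centralBinom_succ n)
    have hrec2 : (((n : ℝ) + 1) * (Nat.centralBinom (n + 1) : ℝ))^2
        = (2 * (2 * (n:ℝ) + 1) * (Nat.centralBinom n : ℝ))^2 := by rw [hrec]
    have hn1 : (0:ℝ) < ((n:ℝ)+1)^2 * (3*n+1) := by positivity
    have hsq : ((Nat.centralBinom (n+1) : ℝ))^2 * ((n:ℝ)+1)^2
        = 4 * (2*(n:ℝ)+1)^2 * ((Nat.centralBinom n : ℝ))^2 := by linear_combination hrec2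
    have h16 : (0:ℝ) ≤ (16:ℝ)^n := by positivity
    have hpoly : 4 * (2*(n:ℝ)+1)^2 * (3*(n:ℝ)+4) ≤ 16 * (3*(n:ℝ)+1) * ((n:ℝ)+1)^2 := by
      nlinarith [Nat.cast_nonneg (α := ℝ) n]
    have key : ((Nat.centralBinom (n+1) : ℝ))^2 * (3*((n:ℝ)+1)+1) * (((n:ℝ)+1)^2 * (3*(n:ℝ)+1))
        ≤ 16^(n+1) * (((n:ℝ)+1)^2 * (3*(n:ℝ)+1)) := by
      have hcb : (0:ℝ) ≤ ((Nat.centralBinom n : ℝ))^2 := sq_nonneg _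
      calc ((Nat.centralBinom (n+1) : ℝ))^2 * (3*((n:ℝ)+1)+1) * (((n:ℝ)+1)^2 * (3*(n:ℝ)+1))
          = (((Nat.centralBinom n : ℝ))^2 * (3*(n:ℝ)+1)) * (4 * (2*(n:ℝ)+1)^2 * (3*(n:ℝ)+4)) := by
            linear_combination (3*((n:ℝ)+1)+1) * (3*(n:ℝ)+1) * hsq
        _ ≤ (16^n) * (16 * (3*(n:ℝ)+1) * ((n:ℝ)+1)^2) := by
            apply mul_le_mul ih hpoly (by positivity) h16
        _ = 16^(n+1) * (((n:ℝ)+1)^2 * (3*(n:ℝ)+1)) := by ring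
    have := le_of_mul_le_mul_right (by
      calc ((Nat.centralBinom (n+1) : ℝ))^2 * (3*((n:ℝ)+1)+1) * (((n:ℝ)+1)^2 * (3*(n:ℝ)+1))
          ≤ 16^(n+1) * (((n:ℝ)+1)^2 * (3*(n:ℝ)+1)) := key) hn1
    calc ((Nat.centralBinom (n+1) : ℝ))^2 * (3*((n+1:ℕ):ℝ)+1)
        = ((Nat.centralBinom (n+1) : ℝ))^2 * (3*((n:ℝ)+1)+1) := by push_cast; ring
      _ ≤ 16^(n+1) := this

/-- `(2n+1) * centralBinom n ≤ 2√(n+1) * 4^n`. -/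
lemma cb_bound (n : ℕ) :
    ((2 * n + 1 : ℕ) : ℝ) * (Nat.centralBinom n : ℝ) ≤ 2 * Real.sqrt (n + 1) * 4 ^ n := by
  have h0 : (0:ℝ) ≤ ((2 * n + 1 : ℕ) : ℝ) * (Nat.centralBinom n : ℝ) := by positivity
  have h1 : (0:ℝ) ≤ 2 * Real.sqrt (n + 1) * 4 ^ n := by positivity
  have hsq : (((2 * n + 1 : ℕ) : ℝ) * (Nat.centralBinom n : ℝ))^2
      ≤ (2 * Real.sqrt (n + 1) * 4 ^ n)^2 := by
    have hmain := centralBinom_sq_le n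
    have h31 : (0:ℝ) < 3*(n:ℝ)+1 := by positivity
    have hr : (2 * Real.sqrt (n + 1) * 4 ^ n)^2 = 4 * ((n:ℝ)+1) * 16^n := by
      have : (Real.sqrt ((n:ℝ) + 1))^2 = (n:ℝ)+1 := Real.sq_sqrt (by positivity)
      have h4 : ((4:ℝ)^n)^2 = 16^n := by
        rw [← pow_mul, mul_comm, pow_mul]
        norm_num
      nlinarith [this, h4]
    rw [hr]
    have hcast : (((2 * n + 1 : ℕ) : ℝ)) = 2*(n:ℝ)+1 := by push_cast; ring
    rw [hcast]
    have expand : ((2*(n:ℝ)+1) * (Nat.centralBinom n : ℝ))^2 * (3*(n:ℝ)+1)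
        = (2*(n:ℝ)+1)^2 * (((Nat.centralBinom n : ℝ))^2 * (3*(n:ℝ)+1)) := by ring
    have step : ((2*(n:ℝ)+1) * (Nat.centralBinom n : ℝ))^2 * (3*(n:ℝ)+1)
        ≤ (2*(n:ℝ)+1)^2 * 16^n := by
      rw [expand]
      exact mul_le_mul_of_nonneg_left hmain (by positivity)
    have hpoly : (2*(n:ℝ)+1)^2 * (16:ℝ)^n ≤ 4*((n:ℝ)+1)*(3*(n:ℝ)+1) * 16^n := by
      have : (2*(n:ℝ)+1)^2 ≤ 4*((n:ℝ)+1)*(3*(n:ℝ)+1) := by nlinarith [Nat.cast_nonneg (α := ℝ) n]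
      exact mul_le_mul_of_nonneg_right this (by positivity)
    nlinarith [step, hpoly]
  nlinarith [hsq, h0, h1]

lemma sqrt_pi_le_stirlingSeq (m : ℕ) : Real.sqrt π ≤ Stirling.stirlingSeq (m + 1) := by
  have htend : Tendsto (Stirling.stirlingSeq ∘ Nat.succ) atTop (𝓝 (Real.sqrt π)) :=
    Stirling.tendsto_stirlingSeq_sqrt_pi.comp (tendsto_add_atTop_nat 1)
  exact Stirling.stirlingSeq'_antitone.le_of_tendsto htend m

lemma factorial_lower (m : ℕ) (hm : 1 ≤ m) :
    Real.sqrt (2 * m) * ((m : ℝ) / Real.exp 1) ^ m ≤ (Nat.factorial m : ℝ) := by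
  obtain ⟨k, rfl⟩ : ∃ k, m = k + 1 := ⟨m - 1, by omega⟩
  have h1 : Real.sqrt π ≤ Stirling.stirlingSeq (k + 1) := sqrt_pi_le_stirlingSeq k
  have hpos : (0:ℝ) < Real.sqrt (2 * ((k:ℝ)+1)) * (((k:ℝ)+1) / Real.exp 1) ^ (k+1) := by
    positivity
  have h2 : (1:ℝ) ≤ Real.sqrt π := by
    rw [show (1:ℝ) = Real.sqrt 1 by simp]
    exact Real.sqrt_le_sqrt (by nlinarith [Real.pi_gt_three])
  have h3 : (1:ℝ) ≤ Stirling.stirlingSeq (k + 1) := le_trans h2 h1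
  rw [Stirling.stirlingSeq] at h3
  have hcast : ((k+1:ℕ):ℝ) = (k:ℝ)+1 := by push_cast; ring
  rw [hcast] at h3
  have := (one_le_div hpos).1 h3
  calc Real.sqrt (2 * ((k+1:ℕ):ℝ)) * (((k+1:ℕ):ℝ) / Real.exp 1) ^ (k+1)
      = Real.sqrt (2 * ((k:ℝ)+1)) * (((k:ℝ)+1) / Real.exp 1) ^ (k+1) := by rw [hcast]
    _ ≤ (Nat.factorial (k+1) : ℝ) := this

lemma factorial_upper (m : ℕ) (hm : 1 ≤ m) :
    (Nat.factorial m : ℝ) ≤ (Real.exp 1 / Real.sqrt 2) *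
      (Real.sqrt (2 * m) * ((m : ℝ) / Real.exp 1) ^ m) := by
  obtain ⟨k, rfl⟩ : ∃ k, m = k + 1 := ⟨m - 1, by omega⟩
  have h1 : Stirling.stirlingSeq (k + 1) ≤ Stirling.stirlingSeq 1 :=
    Stirling.stirlingSeq'_antitone (Nat.zero_le k)
  rw [Stirling.stirlingSeq_one] at h1
  rw [Stirling.stirlingSeq] at h1
  have hpos : (0:ℝ) < Real.sqrt (2 * ((k+1:ℕ):ℝ)) * (((k+1:ℕ):ℝ) / Real.exp 1) ^ (k+1) := by
    have : (0:ℝ) < ((k+1:ℕ):ℝ) := by positivity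
    positivity
  have := (div_le_iff₀ hpos).1 h1
  linarith [this]

lemma term_le_pow {a b : ℝ} (ha : 0 ≤ a) (hb : 0 ≤ b) {n j : ℕ} (hj : j ≤ n) :
    (n.choose j : ℝ) * a ^ j * b ^ (n - j) ≤ (a + b) ^ n := by
  rw [add_pow]
  have hmem : j ∈ Finset.range (n + 1) := Finset.mem_range.2 (Nat.lt_succ_of_le hj)
  have h := Finset.single_le_sum (f := fun i => a ^ i * b ^ (n - i) * (n.choose i : ℝ))
    (fun i _ => by positivity) hmem
  calc (n.choose j : ℝ) * a ^ j * b ^ (n - j)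
      = a ^ j * b ^ (n - j) * (n.choose j : ℝ) := by ring
    _ ≤ _ := h

lemma geom_decay {β : ℝ} (h0 : 0 < β) (h1 : β < 1) (n : ℕ) :
    β ^ n ≤ (1 / (1 - β)) / Real.sqrt (n + 1) := by
  have hs : Real.sqrt ((n:ℝ) + 1) ≤ (n:ℝ) + 1 := by
    have h' : Real.sqrt ((n:ℝ)+1) ≤ Real.sqrt (((n:ℝ)+1)^2) :=
      Real.sqrt_le_sqrt (by nlinarith [Nat.cast_nonneg (α := ℝ) n])
    rwa [Real.sqrt_sq (by positivity)] at h'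
  have hspos : (0:ℝ) < Real.sqrt ((n:ℝ) + 1) := by positivity
  have hb : (0:ℝ) < 1 - β := by linarith
  -- key : β^n * (n+1) * (1-β) ≤ 1
  have hber : 1 + (n:ℝ) * (1/β - 1) ≤ (1/β) ^ n := by
    have := one_add_mul_le_pow (a := 1/β - 1) (by nlinarith [one_le_one_div h0 h1.le]) n
    calc 1 + (n:ℝ) * (1/β - 1) ≤ (1 + (1/β - 1)) ^ n := this
      _ = (1/β) ^ n := by ring_nf
  have hkey : β ^ n * (((n:ℝ) + 1) * (1 - β)) ≤ 1 := by
    have h2 : ((n:ℝ) + 1) * (1 - β) ≤ 1 + (n:ℝ) * (1/β - 1) := by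
      have : (1:ℝ) - β ≤ 1/β - 1 := by
        rw [div_sub' (ne_of_gt h0), le_div_iff₀ h0]; nlinarith
      nlinarith [Nat.cast_nonneg (α := ℝ) n]
    have h3 : β ^ n * (1/β) ^ n = 1 := by
      rw [← mul_pow]; rw [mul_one_div, div_self (ne_of_gt h0), one_pow]
    calc β ^ n * (((n:ℝ) + 1) * (1 - β)) ≤ β ^ n * (1 + (n:ℝ) * (1/β - 1)) := by
          apply mul_le_mul_of_nonneg_left h2 (by positivity)
      _ ≤ β ^ n * (1/β) ^ n := by
          apply mul_le_mul_of_nonneg_left hber (by positivity)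
      _ = 1 := h3
  rw [div_div, le_div_iff₀ (by positivity)]
  calc β ^ n * ((1 - β) * Real.sqrt ((n:ℝ)+1)) ≤ β ^ n * ((1 - β) * ((n:ℝ)+1)) := by
        apply mul_le_mul_of_nonneg_left (mul_le_mul_of_nonneg_left hs hb.le) (by positivity)
    _ ≤ 1 := by calc β ^ n * ((1 - β) * ((n:ℝ)+1)) = β ^ n * (((n:ℝ) + 1) * (1 - β)) := by ring
                  _ ≤ 1 := hkey

lemma amgm_pow {A B : ℝ} (hA : 0 ≤ A) (hB : 0 ≤ B) (j m : ℕ) (hjm : 0 < j + m)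
    (h : (j : ℝ) * A + (m : ℝ) * B ≤ (j : ℝ) + m) : A ^ j * B ^ m ≤ 1 := by
  set N : ℝ := (j : ℝ) + m with hN
  have hN0 : (0:ℝ) < N := by
    have : (0:ℝ) < ((j + m : ℕ) : ℝ) := by exact_mod_cast hjm
    rw [hN]; push_cast at this ⊢; linarith
  have hw : (j : ℝ) / N + (m : ℝ) / N = 1 := by field_simp; linarith [hN]
  have h1 : A ^ ((j:ℝ)/N) * B ^ ((m:ℝ)/N) ≤ ((j:ℝ)/N) * A + ((m:ℝ)/N) * B :=
    Real.geom_mean_le_arith_mean2_weighted (by positivity) (by positivity) hA hB hw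
  have h2 : ((j:ℝ)/N) * A + ((m:ℝ)/N) * B ≤ 1 := by
    rw [div_mul_eq_mul_div, div_mul_eq_mul_div, ← add_div, div_le_one hN0]
    linarith
  have h3 : (A ^ ((j:ℝ)/N) * B ^ ((m:ℝ)/N)) ^ (j + m) ≤ 1 ^ (j + m) :=
    pow_le_pow_left₀ (by positivity) (h1.trans h2) _
  have eA : (A ^ ((j:ℝ)/N)) ^ (j + m) = A ^ j := by
    rw [← Real.rpow_natCast (A ^ ((j:ℝ)/N)) (j + m), ← Real.rpow_mul hA]
    rw [show (j:ℝ)/N * ((j + m : ℕ):ℝ) = (j:ℕ) by push_cast [hN]; field_simp; exact mul_div_cancel_right₀ _ (by linarith : (0:ℝ) < j + m).ne']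
    exact Real.rpow_natCast A j
  have eB : (B ^ ((m:ℝ)/N)) ^ (j + m) = B ^ m := by
    rw [← Real.rpow_natCast (B ^ ((m:ℝ)/N)) (j + m), ← Real.rpow_mul hB]
    rw [show (m:ℝ)/N * ((j + m : ℕ):ℝ) = (m:ℕ) by push_cast [hN]; field_simp; exact mul_div_cancel_right₀ _ (by linarith : (0:ℝ) < j + m).ne']
    exact Real.rpow_natCast B m
  rw [mul_pow, eA, eB, one_pow] at h3
  exact h3

lemma tail_bound {p : ℝ} (hp : 0 < p) (hp1 : p < 1) :
    ∃ β : ℝ, 0 < β ∧ β < 1 ∧ ∀ n j : ℕ, j ≤ n → 2 * (j : ℝ) ≤ (n : ℝ) * p →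
      (n.choose j : ℝ) * p ^ j * (1 - p) ^ (n - j) ≤ β ^ n := by
  refine ⟨(2:ℝ) ^ (p/2) * (1 - p/2),
    mul_pos (Real.rpow_pos_of_pos (by norm_num) _) (by linarith), ?_, ?_⟩
  · have h1 : 1 - p/2 < Real.exp (-(p/2)) := by
      have := Real.add_one_lt_exp (x := -(p/2)) (by intro h; nlinarith [h])
      linarith
    have h2 : (2:ℝ) ^ (p/2) = Real.exp (Real.log 2 * (p/2)) :=
      Real.rpow_def_of_pos (by norm_num) _
    have h3 : (2:ℝ) ^ (p/2) * (1 - p/2) < Real.exp (Real.log 2 * (p/2)) * Real.exp (-(p/2)) := by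
      rw [h2]
      apply mul_lt_mul_of_pos_left h1 (Real.exp_pos _)
    rw [← Real.exp_add] at h3
    have h4 : Real.log 2 * (p/2) + (-(p/2)) < 0 := by
      have hl2 : Real.log 2 < 1 := by
        have := Real.log_two_lt_d9; linarith
      nlinarith
    have h5 : Real.exp (Real.log 2 * (p/2) + (-(p/2))) < 1 := by
      calc Real.exp _ < Real.exp 0 := Real.exp_lt_exp.2 h4
        _ = 1 := Real.exp_zero
    linarith
  · intro n j hj hnp
    have hq : (0:ℝ) ≤ 1 - p := by linarith
    have e1 : (n.choose j : ℝ) * p ^ j * (1 - p) ^ (n - j)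
        = 2 ^ j * ((n.choose j : ℝ) * (p/2) ^ j * (1 - p) ^ (n - j)) := by
      rw [show p = 2 * (p/2) by ring, mul_pow]; ring_nf
    rw [e1]
    have e2 : (n.choose j : ℝ) * (p/2) ^ j * (1 - p) ^ (n - j) ≤ (1 - p/2) ^ n := by
      have := term_le_pow (a := p/2) (b := 1 - p) (by positivity) hq hj
      calc (n.choose j : ℝ) * (p/2) ^ j * (1 - p) ^ (n - j) ≤ (p/2 + (1 - p)) ^ n := this
        _ = (1 - p/2) ^ n := by ring_nf
    have e3 : (2:ℝ) ^ j ≤ ((2:ℝ) ^ (p/2)) ^ n := by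
      rw [← Real.rpow_natCast 2 j, ← Real.rpow_natCast ((2:ℝ) ^ (p/2)) n, ← Real.rpow_mul
        (by norm_num)]
      apply Real.rpow_le_rpow_of_exponent_le one_le_two
      nlinarith
    calc (2:ℝ) ^ j * ((n.choose j : ℝ) * (p/2) ^ j * (1 - p) ^ (n - j))
        ≤ ((2:ℝ) ^ (p/2)) ^ n * (1 - p/2) ^ n := by
          apply mul_le_mul e3 e2 (by positivity) (by positivity)
      _ = ((2:ℝ) ^ (p/2) * (1 - p/2)) ^ n := by rw [mul_pow]

lemma middle_bound {p : ℝ} (hp : 0 < p) (hp1 : p < 1) (n j m : ℕ)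
    (hnm : n = j + m) (hj1 : 1 ≤ j) (hm1 : 1 ≤ m)
    (h1 : (n:ℝ) * p ≤ 2 * j) (h2 : (n:ℝ) * (1 - p) ≤ 2 * m) :
    (n.choose j : ℝ) * p ^ j * (1 - p) ^ m ≤
      (Real.exp 1 * Real.sqrt 2 / Real.sqrt (p * (1 - p))) / Real.sqrt (n + 1) := by
  set q : ℝ := 1 - p with hqdef
  have hq : 0 < q := by rw [hqdef]; linarith
  set E : ℝ := Real.exp 1 with hEdef
  have hE : 0 < E := Real.exp_pos 1
  have hn1 : 1 ≤ n := by omega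
  have hjn : j ≤ n := by omega
  have hj0 : (0:ℝ) < j := by exact_mod_cast hj1
  have hm0 : (0:ℝ) < m := by exact_mod_cast hm1
  have hn0 : (0:ℝ) < n := by exact_mod_cast hn1
  have hmn : (n:ℝ) = (j:ℝ) + m := by exact_mod_cast hnm
  -- cast choose
  have hchoose : (n.choose j : ℝ) = (Nat.factorial n : ℝ) /
      ((Nat.factorial j : ℝ) * (Nat.factorial m : ℝ)) := by
    rw [Nat.cast_choose ℝ hjn, show n - j = m by omega]
  set A : ℝ := (n:ℝ) * p / j with hAdef
  set B : ℝ := (n:ℝ) * q / m with hBdef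
  have hA0 : 0 ≤ A := by positivity
  have hB0 : 0 ≤ B := by positivity
  have hAB : A ^ j * B ^ m ≤ 1 := by
    apply amgm_pow hA0 hB0 j m (by omega)
    have ej : (j:ℝ) * A = (n:ℝ) * p := by rw [hAdef]; field_simp
    have em : (m:ℝ) * B = (n:ℝ) * q := by rw [hBdef]; field_simp
    rw [ej, em, hqdef]
    nlinarith [hmn]
  -- numerator and denominator bounds
  set NU : ℝ := (E / Real.sqrt 2) * (Real.sqrt (2 * n) * ((n:ℝ)/E) ^ n) * (p ^ j * q ^ m)
    with hNUdef
  set DL : ℝ := (Real.sqrt (2 * j) * ((j:ℝ)/E) ^ j) * (Real.sqrt (2 * m) * ((m:ℝ)/E) ^ m)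
    with hDLdef
  have hDL0 : 0 < DL := by rw [hDLdef]; positivity
  have hnum : (Nat.factorial n : ℝ) * (p ^ j * q ^ m) ≤ NU := by
    rw [hNUdef]
    apply mul_le_mul_of_nonneg_right (factorial_upper n hn1) (by positivity)
  have hden : DL ≤ (Nat.factorial j : ℝ) * (Nat.factorial m : ℝ) := by
    rw [hDLdef]
    apply mul_le_mul (factorial_lower j hj1) (factorial_lower m hm1) (by positivity)
      (by positivity)
  have hstep1 : (n.choose j : ℝ) * p ^ j * q ^ m ≤ NU / DL := by
    rw [hchoose]
    calc (Nat.factorial n : ℝ) / ((Nat.factorial j : ℝ) * (Nat.factorial m : ℝ)) * p ^ j * q ^ m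
        = (Nat.factorial n : ℝ) * (p ^ j * q ^ m) /
          ((Nat.factorial j : ℝ) * (Nat.factorial m : ℝ)) := by ring
      _ ≤ NU / DL := by
          apply div_le_div₀ (by rw [hNUdef]; positivity) hnum hDL0 hden
  -- rewrite NU / DL
  have hsplit : ((n:ℝ)/E) ^ n = ((n:ℝ)/E) ^ j * ((n:ℝ)/E) ^ m := by
    rw [← pow_add, ← hnm]
  have epj : ((n:ℝ)/E) ^ j * p ^ j = A ^ j * ((j:ℝ)/E) ^ j := by
    rw [← mul_pow, ← mul_pow]
    congr 1
    rw [hAdef]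
    field_simp
    try ring
  have epm : ((n:ℝ)/E) ^ m * q ^ m = B ^ m * ((m:ℝ)/E) ^ m := by
    rw [← mul_pow, ← mul_pow]
    congr 1
    rw [hBdef]
    field_simp
    try ring
  have hjE : (0:ℝ) < ((j:ℝ)/E) ^ j := by positivity
  have hmE : (0:ℝ) < ((m:ℝ)/E) ^ m := by positivity
  have hsj : (0:ℝ) < Real.sqrt (2 * j) := by positivity
  have hsm : (0:ℝ) < Real.sqrt (2 * m) := by positivity
  have hcanc : (((j:ℝ)/E) ^ j * ((m:ℝ)/E) ^ m) ≠ 0 := by positivity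
  have hNU' : NU = ((E / Real.sqrt 2) * Real.sqrt (2 * n) * (A ^ j * B ^ m)) *
      (((j:ℝ)/E) ^ j * ((m:ℝ)/E) ^ m) := by
    rw [hNUdef]
    calc (E / Real.sqrt 2) * (Real.sqrt (2 * n) * ((n:ℝ)/E) ^ n) * (p ^ j * q ^ m)
        = (E / Real.sqrt 2) * Real.sqrt (2 * n) * ((((n:ℝ)/E) ^ j * p ^ j) *
          (((n:ℝ)/E) ^ m * q ^ m)) := by rw [hsplit]; ring
      _ = ((E / Real.sqrt 2) * Real.sqrt (2 * n) * (A ^ j * B ^ m)) *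
          (((j:ℝ)/E) ^ j * ((m:ℝ)/E) ^ m) := by rw [epj, epm]; ring
  have hDL' : DL = (Real.sqrt (2 * j) * Real.sqrt (2 * m)) *
      (((j:ℝ)/E) ^ j * ((m:ℝ)/E) ^ m) := by rw [hDLdef]; ring
  have hratio : NU / DL = (E / Real.sqrt 2) *
      (Real.sqrt (2 * n) / (Real.sqrt (2 * j) * Real.sqrt (2 * m))) * (A ^ j * B ^ m) := by
    rw [hNU', hDL', mul_div_mul_right _ _ hcanc]
    ring
  -- bound the sqrt ratio
  have hjm4 : (n:ℝ)^2 * (p * q) ≤ 4 * ((j:ℝ) * m) := by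
    have hle : ((n:ℝ) * p) * ((n:ℝ) * q) ≤ (2 * (j:ℝ)) * (2 * (m:ℝ)) := by
      apply mul_le_mul h1 ?_ (by positivity) (by positivity)
      rw [hqdef]; exact h2
    linarith [hle, sq_nonneg ((n:ℝ))]

  have hsqrtratio : Real.sqrt (2 * n) / (Real.sqrt (2 * j) * Real.sqrt (2 * m))
      ≤ 2 / (Real.sqrt (n + 1) * Real.sqrt (p * q)) := by
    have e1 : Real.sqrt (2 * j) * Real.sqrt (2 * m) = Real.sqrt (4 * ((j:ℝ) * m)) := by
      rw [← Real.sqrt_mul (by positivity)]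
      congr 1; ring
    rw [e1, ← Real.sqrt_div (by positivity)]
    have e2 : (2:ℝ) / (Real.sqrt (n + 1) * Real.sqrt (p * q))
        = Real.sqrt (4 / (((n:ℝ) + 1) * (p * q))) := by
      rw [Real.sqrt_div (by norm_num : (0:ℝ) ≤ 4), Real.sqrt_mul (by positivity),
        show Real.sqrt 4 = 2 by
          rw [show (4:ℝ) = 2^2 by norm_num, Real.sqrt_sq (by norm_num : (0:ℝ) ≤ 2)]]
      rw [Real.sqrt_mul (by positivity : (0:ℝ) ≤ ((n:ℝ)+1)), Real.sqrt_mul hp.le]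
    rw [e2]
    apply Real.sqrt_le_sqrt
    rw [div_le_div_iff₀ (by positivity) (by positivity)]
    have hn2 : (n:ℝ) + 1 ≤ 2 * n := by
      have : (1:ℝ) ≤ n := by exact_mod_cast hn1
      linarith
    calc 2 * (n:ℝ) * (((n:ℝ) + 1) * (p * q)) ≤ 2 * (n:ℝ) * ((2 * n) * (p * q)) := by
          apply mul_le_mul_of_nonneg_left (mul_le_mul_of_nonneg_right hn2 (by positivity))
            (by positivity)
      _ = 4 * ((n:ℝ)^2 * (p * q)) := by ring
      _ ≤ 4 * (4 * ((j:ℝ) * m)) := by linarith [hjm4]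
      _ = 4 * (4 * ((j:ℝ) * m)) := rfl
  -- combine
  have hfinal : NU / DL ≤ (E * Real.sqrt 2 / Real.sqrt (p * q)) / Real.sqrt (n + 1) := by
    rw [hratio]
    have hs2 : (0:ℝ) < Real.sqrt 2 := by positivity
    calc (E / Real.sqrt 2) * (Real.sqrt (2 * n) / (Real.sqrt (2 * j) * Real.sqrt (2 * m)))
          * (A ^ j * B ^ m)
        ≤ (E / Real.sqrt 2) * (2 / (Real.sqrt (n + 1) * Real.sqrt (p * q))) * 1 := by
          apply mul_le_mul (mul_le_mul_of_nonneg_left hsqrtratio (by positivity)) hAB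
            (by positivity) (by positivity)
      _ = (E * Real.sqrt 2 / Real.sqrt (p * q)) / Real.sqrt (n + 1) := by
          rw [mul_one]
          have h22 : Real.sqrt 2 * Real.sqrt 2 = 2 := Real.mul_self_sqrt (by norm_num)
          have hs2 : Real.sqrt 2 ≠ 0 := by positivity
          have hEd : E / Real.sqrt 2 * 2 = E * Real.sqrt 2 := by
            rw [div_mul_eq_mul_div, div_eq_iff hs2]
            linear_combination (-E) * h22
          calc (E / Real.sqrt 2) * (2 / (Real.sqrt (n + 1) * Real.sqrt (p * q)))
              = (E / Real.sqrt 2 * 2) / (Real.sqrt (p * q) * Real.sqrt (n + 1)) := by ring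
            _ = (E * Real.sqrt 2) / (Real.sqrt (p * q) * Real.sqrt (n + 1)) := by rw [hEd]
            _ = (E * Real.sqrt 2 / Real.sqrt (p * q)) / Real.sqrt (n + 1) := by
                rw [div_div]
  exact hstep1.trans hfinal

lemma key_binom {p : ℝ} (hp : 0 < p) (hp1 : p < 1) :
    ∃ c : ℝ, 0 < c ∧ ∀ n j : ℕ, j ≤ n →
      (n.choose j : ℝ) * p ^ j * (1 - p) ^ (n - j) ≤ c / Real.sqrt (n + 1) := by
  obtain ⟨β₁, hβ₁0, hβ₁1, hβ₁⟩ := tail_bound hp hp1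
  obtain ⟨β₂, hβ₂0, hβ₂1, hβ₂⟩ := tail_bound (p := 1 - p) (by linarith) (by linarith)
  set cmid : ℝ := Real.exp 1 * Real.sqrt 2 / Real.sqrt (p * (1 - p)) with hcmid
  have hpq : (0:ℝ) < p * (1 - p) := by nlinarith
  have hcmid0 : 0 < cmid := by rw [hcmid]; positivity
  have hb1 : (0:ℝ) < 1 - β₁ := by linarith
  have hb2 : (0:ℝ) < 1 - β₂ := by linarith
  set c : ℝ := 1 / (1 - β₁) + 1 / (1 - β₂) + cmid with hcdef
  have hc0 : 0 < c := by rw [hcdef]; positivity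
  refine ⟨c, hc0, ?_⟩
  intro n j hjn
  have hsn : (0:ℝ) < Real.sqrt (n + 1) := by positivity
  have hcle : ∀ y : ℝ, y ≤ c → y / Real.sqrt ((n:ℝ)+1) ≤ c / Real.sqrt ((n:ℝ) + 1) :=
    fun y hy => (div_le_div_iff_of_pos_right hsn).2 hy
  by_cases hcase1 : 2 * (j:ℝ) ≤ (n:ℝ) * p
  · have ht := hβ₁ n j hjn hcase1
    have h2 := geom_decay hβ₁0 hβ₁1 n
    refine (ht.trans h2).trans (hcle _ ?_)
    rw [hcdef]; nlinarith [hc0, hcmid0, hb2, one_div_pos.2 hb2]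
  by_cases hcase2 : 2 * (((n - j : ℕ)):ℝ) ≤ (n:ℝ) * (1 - p)
  · have ht := hβ₂ n (n - j) (Nat.sub_le n j) hcase2
    rw [Nat.choose_symm hjn, Nat.sub_sub_self hjn, sub_sub_cancel] at ht
    have ht' : (n.choose j : ℝ) * p ^ j * (1 - p) ^ (n - j) ≤ β₂ ^ n := by
      calc (n.choose j : ℝ) * p ^ j * (1 - p) ^ (n - j)
          = (n.choose j : ℝ) * (1 - p) ^ (n - j) * p ^ j := by ring
        _ ≤ β₂ ^ n := ht
    have h2 := geom_decay hβ₂0 hβ₂1 n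
    refine (ht'.trans h2).trans (hcle _ ?_)
    rw [hcdef]; nlinarith [hcmid0, hb1, one_div_pos.2 hb1]
  · push_neg at hcase1 hcase2
    set m : ℕ := n - j with hmdef
    have hmcast : ((m:ℕ):ℝ) = (n:ℝ) - j := by
      rw [hmdef, Nat.cast_sub hjn]
    have hj1 : 1 ≤ j := by
      by_contra h
      have : j = 0 := by omega
      rw [this] at hcase1
      push_cast at hcase1
      nlinarith [mul_nonneg (Nat.cast_nonneg (α := ℝ) n) hp.le]
    have hm1 : 1 ≤ m := by
      by_contra h
      have : m = 0 := by omega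
      rw [this] at hcase2
      push_cast at hcase2
      nlinarith [mul_nonneg (Nat.cast_nonneg (α := ℝ) n) (by linarith : (0:ℝ) ≤ 1 - p)]
    have hnm : n = j + m := by omega
    have ht := middle_bound hp hp1 n j m hnm hj1 hm1 (le_of_lt hcase1)
      (by rw [hmcast] at hcase2 ⊢; linarith)
    refine ht.trans (hcle _ ?_)
    rw [hcdef]; nlinarith [one_div_pos.2 hb1, one_div_pos.2 hb2]

end Stmt13

open Nat Stmt13 in
/-- for `u > 2/5`, `(10u)^k (4D+1-2k)!!/(D-k)!` is uniformly dominated by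
`s (100u²/(5u-1))^D D!`. -/
theorem stmt_13 (u : ℝ) (hu : 2/5 < u) :
    ∃ s : ℝ, 0 < s ∧
      ∀ D k : ℕ, k ≤ D →
        (10 * u) ^ k * (Nat.doubleFactorial (4 * D + 1 - 2 * k) : ℝ) /
            (Nat.factorial (D - k) : ℝ)
          ≤ s * (100 * u ^ 2 / (5 * u - 1)) ^ D * (Nat.factorial D : ℝ) := by
  have hu0 : (0:ℝ) < u := by linarith
  have h5u : (0:ℝ) < 5 * u - 1 := by linarith
  have h5u2 : (1:ℝ) < 5 * u := by linarith
  set p : ℝ := 1 / (5 * u) with hpdef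
  have hp0 : 0 < p := by rw [hpdef]; positivity
  have hp1 : p < 1 := by
    rw [hpdef, div_lt_one (by linarith)]; linarith
  obtain ⟨c, hc0, hc⟩ := key_binom hp0 hp1
  refine ⟨2 * c, by linarith, ?_⟩
  intro D k hkD
  set C : ℝ := 100 * u ^ 2 / (5 * u - 1) with hCdef
  have hC0 : 0 < C := by rw [hCdef]; positivity
  set n : ℕ := 2 * D - k with hndef
  set j : ℕ := D - k with hjdef
  have hjn : j ≤ n := by omega
  have hnjD : n - j = D := by omega
  have harg : 4 * D + 1 - 2 * k = 2 * n + 1 := by omega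
  rw [harg]
  -- ℕ identity
  have f1 : (2 * n + 1) ! = (2 * n + 1)‼ * (2 * n)‼ := Nat.factorial_eq_mul_doubleFactorial (2 * n)
  have f2 : (2 * n)‼ = 2 ^ n * n ! := Nat.doubleFactorial_two_mul n
  have f3 : (2 * n) ! = Nat.centralBinom n * (n ! * n !) := by
    have h := Nat.choose_mul_factorial_mul_factorial (show n ≤ 2 * n by omega)
    rw [show 2 * n - n = n by omega] at h
    rw [Nat.centralBinom, ← h]
    ring
  have f4 : n ! = n.choose j * (j ! * D !) := by
    have h := Nat.choose_mul_factorial_mul_factorial hjn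
    rw [hnjD] at h
    rw [← h]
    ring
  have f5 : (2 * n + 1) ! = (2 * n + 1) * (2 * n) ! := Nat.factorial_succ (2 * n)
  have eNat : (2 * n + 1)‼ * 2 ^ n = (2 * n + 1) * Nat.centralBinom n * (n.choose j * (j ! * D !)) := by
    have h1 : (2 * n + 1)‼ * 2 ^ n * n ! = ((2 * n + 1) * Nat.centralBinom n * n !) * n ! := by
      calc (2 * n + 1)‼ * 2 ^ n * n ! = (2 * n + 1)‼ * (2 ^ n * n !) := by ring
        _ = (2 * n + 1)‼ * (2 * n)‼ := by rw [f2]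
        _ = (2 * n + 1) ! := f1.symm
        _ = (2 * n + 1) * (2 * n) ! := f5
        _ = ((2 * n + 1) * Nat.centralBinom n * n !) * n ! := by rw [f3]; ring
    have h2 := Nat.eq_of_mul_eq_mul_right (Nat.factorial_pos n) h1
    rw [f4] at h2
    exact h2
  -- real identity for the double factorial
  have h2n : ((2:ℝ)) ^ n ≠ 0 := by positivity
  have hdfR : ((2 * n + 1)‼ : ℝ)
      = (((2 * n + 1) * Nat.centralBinom n : ℕ) : ℝ) * ((n.choose j : ℝ) * ((j ! : ℝ) * (D ! : ℝ))) / 2 ^ n := by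
    rw [eq_div_iff h2n]
    have h := congrArg (Nat.cast : ℕ → ℝ) eNat
    push_cast at h ⊢
    linear_combination h
  have hjfac : (0:ℝ) < (j ! : ℝ) := by exact_mod_cast Nat.factorial_pos j
  have hLHS : (10 * u) ^ k * ((2 * n + 1)‼ : ℝ) / ((j ! : ℝ))
      = (10 * u) ^ k * ((((2 * n + 1) * Nat.centralBinom n : ℕ)) : ℝ) * (n.choose j : ℝ)
        * (D ! : ℝ) / 2 ^ n := by
    rw [hdfR]
    field_simp
  rw [hLHS]
  -- bounds
  have hq0 : (0:ℝ) < 1 - p := by linarith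
  have hsn : (0:ℝ) < Real.sqrt ((n:ℝ) + 1) := by positivity
  have hkb := hc n j hjn
  rw [hnjD] at hkb
  have hch : (n.choose j : ℝ) ≤ c / (Real.sqrt ((n:ℝ) + 1) * (p ^ j * (1 - p) ^ D)) := by
    rw [le_div_iff₀ (by positivity)]
    calc (n.choose j : ℝ) * (Real.sqrt ((n:ℝ)+1) * (p ^ j * (1 - p) ^ D))
        = ((n.choose j : ℝ) * p ^ j * (1 - p) ^ D) * Real.sqrt ((n:ℝ)+1) := by ring
      _ ≤ (c / Real.sqrt ((n:ℝ)+1)) * Real.sqrt ((n:ℝ)+1) := by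
          apply mul_le_mul_of_nonneg_right hkb (Real.sqrt_nonneg _)
      _ = c := div_mul_cancel₀ c (ne_of_gt hsn)
  have h10u : (0:ℝ) < 10 * u := by linarith
  have hDfac : (0:ℝ) ≤ (D ! : ℝ) := by positivity
  have hstep : (10 * u) ^ k * ((((2 * n + 1) * Nat.centralBinom n : ℕ)) : ℝ) * (n.choose j : ℝ)
        * (D ! : ℝ) / 2 ^ n
      ≤ (10 * u) ^ k * (2 * Real.sqrt ((n:ℝ) + 1) * 4 ^ n)
        * (c / (Real.sqrt ((n:ℝ) + 1) * (p ^ j * (1 - p) ^ D))) * (D ! : ℝ) / 2 ^ n := by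
    have hA : (0:ℝ) ≤ (10 * u) ^ k := pow_nonneg (by linarith) k
    have hcb : (((2 * n + 1) * Nat.centralBinom n : ℕ) : ℝ)
        ≤ 2 * Real.sqrt ((n:ℝ) + 1) * 4 ^ n := by
      have h := cb_bound n
      push_cast at h ⊢
      linarith
    have h1 : (10 * u) ^ k * (((2 * n + 1) * Nat.centralBinom n : ℕ) : ℝ)
        ≤ (10 * u) ^ k * (2 * Real.sqrt ((n:ℝ) + 1) * 4 ^ n) :=
      mul_le_mul_of_nonneg_left hcb hA
    have h2 : (10 * u) ^ k * (((2 * n + 1) * Nat.centralBinom n : ℕ) : ℝ) * (n.choose j : ℝ)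
        ≤ (10 * u) ^ k * (2 * Real.sqrt ((n:ℝ) + 1) * 4 ^ n)
          * (c / (Real.sqrt ((n:ℝ) + 1) * (p ^ j * (1 - p) ^ D))) := by
      apply mul_le_mul h1 hch (Nat.cast_nonneg _)
      have : (0:ℝ) ≤ 2 * Real.sqrt ((n:ℝ) + 1) * 4 ^ n := by positivity
      exact mul_nonneg hA this
    have h3 := mul_le_mul_of_nonneg_right h2 hDfac
    exact (div_le_div_iff_of_pos_right (by positivity : (0:ℝ) < 2 ^ n)).2 h3
  refine hstep.trans ?_
  -- final equality
  have hD : D = k + j := by omega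
  have hn2 : n = k + 2 * j := by omega
  have hu5 : (5:ℝ) * u ≠ 0 := by linarith
  have hCq : C * (1 - p) = 20 * u := by
    rw [hCdef, hpdef]
    rw [div_mul_eq_mul_div, div_eq_iff h5u.ne']
    field_simp [hu0.ne']
    ring
  have hCpq : C * (p * (1 - p)) = 4 := by
    rw [hCdef, hpdef]
    rw [div_mul_eq_mul_div, div_eq_iff h5u.ne']
    field_simp [hu0.ne']
    ring
  have e20 : (10 * u) * 2 = C * (1 - p) := by rw [hCq]; ring
  have e4 : ((2:ℝ) ^ 2) = C * (p * (1 - p)) := by rw [hCpq]; norm_num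
  have hiden : (10 * u) ^ k * 2 ^ n = C ^ D * (p ^ j * (1 - p) ^ D) := by
    rw [hn2, hD]
    calc (10 * u) ^ k * (2:ℝ) ^ (k + 2 * j)
        = (10 * u) ^ k * ((2:ℝ) ^ k * ((2:ℝ) ^ 2) ^ j) := by rw [pow_add, pow_mul]
      _ = ((10 * u) * 2) ^ k * ((2:ℝ) ^ 2) ^ j := by rw [mul_pow (10 * u) 2 k]; ring
      _ = (C * (1 - p)) ^ k * (C * (p * (1 - p))) ^ j := by rw [e20, e4]
      _ = C ^ (k + j) * (p ^ j * (1 - p) ^ (k + j)) := by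
          rw [mul_pow, mul_pow, mul_pow, pow_add, pow_add]; ring
  have hP : (0:ℝ) < p ^ j * (1 - p) ^ D := by positivity
  have h4n : (4:ℝ) ^ n = 2 ^ n * 2 ^ n := by
    rw [← mul_pow]; norm_num
  calc (10 * u) ^ k * (2 * Real.sqrt ((n:ℝ) + 1) * 4 ^ n)
        * (c / (Real.sqrt ((n:ℝ) + 1) * (p ^ j * (1 - p) ^ D))) * (D ! : ℝ) / 2 ^ n
      = 2 * c * ((10 * u) ^ k * 2 ^ n) / (p ^ j * (1 - p) ^ D) * (D ! : ℝ) := by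
        rw [h4n]
        field_simp
    _ = 2 * c * C ^ D * (D ! : ℝ) := by
        rw [hiden]
        field_simp
    _ ≤ 2 * c * C ^ D * (D ! : ℝ) := le_refl _
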